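/- Let F = (f,g) : ℝ² → ℝ² be a polynomial map with nowhere zero Jacobian determinant such that F(0,0) = (0,0). If there exists a real number L such that 1/(f(x,y)² + g(x,y)²) → L as |x| + |y| → +∞, then L = 0. -/

import Mathlib

open MvPolynomial Filter

/-- Let `F = (f,g) : ℝ² → ℝ²` be a polynomial map with nowhere zero Jacobian
determinant such that `F(0,0) = (0,0)`. If `1/(f(x,y)² + g(x,y)²) → L` as `|x|+|y| → +∞`
(along the cocompact filter of `ℝ²`), then `L = 0`. -/
theorem limit_of_reciprocal_criterion_is_zero (f g : MvPolynomial (Fin 2) ℝ)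
    (hJ : ∀ x y : ℝ,
      eval ![x, y] (pderiv (0 : Fin 2) f) * eval ![x, y] (pderiv (1 : Fin 2) g) -
        eval ![x, y] (pderiv (1 : Fin 2) f) * eval ![x, y] (pderiv (0 : Fin 2) g) ≠ 0)
    (h0f : eval ![(0 : ℝ), 0] f = 0) (h0g : eval ![(0 : ℝ), 0] g = 0)
    (L : ℝ)
    (hL : Tendsto (fun p : ℝ × ℝ => 1 / ((eval ![p.1, p.2] f) ^ 2 + (eval ![p.1, p.2] g) ^ 2))
      (cocompact (ℝ × ℝ)) (nhds L)) :
    L = 0 := by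
  by_contra hL0
  -- The squared norm tends to L⁻¹ at infinity.
  have hinv : Tendsto (fun p : ℝ × ℝ => (eval ![p.1, p.2] f) ^ 2 + (eval ![p.1, p.2] g) ^ 2)
      (cocompact (ℝ × ℝ)) (nhds L⁻¹) := by
    have := hL.inv₀ hL0
    simpa [one_div, inv_inv] using this
  -- The map x ↦ (x, 0) tends to cocompact.
  have hline : Tendsto (fun x : ℝ => ((x, (0 : ℝ)) : ℝ × ℝ)) atTop (cocompact (ℝ × ℝ)) := by
    rw [← Filter.coprod_cocompact]
    refine Tendsto.mono_right ?_ le_sup_left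
    rw [tendsto_comap_iff]
    have : (Prod.fst ∘ fun x : ℝ => ((x, (0 : ℝ)) : ℝ × ℝ)) = id := rfl
    rw [this, cocompact_eq_atBot_atTop]
    exact tendsto_id.mono_right le_sup_right
  set P : Polynomial ℝ := MvPolynomial.aeval ![Polynomial.X, 0] (f ^ 2 + g ^ 2) with hPdef
  have hPeval : ∀ x : ℝ, P.eval x = (eval ![x, 0] f) ^ 2 + (eval ![x, 0] g) ^ 2 := by
    intro x
    have h := MvPolynomial.eval₂_comp_left (Polynomial.evalRingHom x)
      (algebraMap ℝ (Polynomial ℝ)) (![Polynomial.X, 0]) (f ^ 2 + g ^ 2)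
    rw [hPdef, MvPolynomial.aeval_def]
    rw [show Polynomial.eval x (eval₂ (algebraMap ℝ (Polynomial ℝ)) ![Polynomial.X, 0]
        (f ^ 2 + g ^ 2)) = (Polynomial.evalRingHom x) (eval₂ (algebraMap ℝ (Polynomial ℝ))
        ![Polynomial.X, 0] (f ^ 2 + g ^ 2)) from rfl, h]
    have h1 : ((Polynomial.evalRingHom x).comp (algebraMap ℝ (Polynomial ℝ))) =
        RingHom.id ℝ := by ext r; simp
    have h2 : ((Polynomial.evalRingHom x) ∘ (![Polynomial.X, 0] : Fin 2 → Polynomial ℝ)) =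
        (![x, 0] : Fin 2 → ℝ) := by
      funext i; fin_cases i <;> simp
    rw [h1, h2]
    rw [MvPolynomial.eval₂_id]; simp
  -- P tends to L⁻¹ at atTop.
  have hPtend : Tendsto (fun x : ℝ => P.eval x) atTop (nhds L⁻¹) := by
    have := hinv.comp hline
    simpa [Function.comp_def, hPeval] using this
  -- P has degree ≤ 0, else |P| → ∞.
  have hdeg : P.degree ≤ 0 := by
    by_contra hd
    push_neg at hd
    have habs := Polynomial.abs_tendsto_atTop P hd
    exact not_tendsto_atTop_of_tendsto_nhds hPtend.abs habs
  -- So P is constant, and P 0 = 0.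
  have hP0 : P.eval 0 = 0 := by
    rw [hPeval 0, h0f, h0g]; ring
  have hC := Polynomial.eq_C_of_degree_le_zero hdeg
  have hzero : L⁻¹ = 0 := by
    refine tendsto_nhds_unique hPtend ?_
    have : (fun x : ℝ => P.eval x) = fun _ => P.coeff 0 := by
      funext x; rw [hC]; simp
    rw [this]
    have : P.coeff 0 = 0 := by
      have := hP0; rw [hC] at this; simpa using this
    rw [this]
    exact tendsto_const_nhds
  exact hL0 (inv_eq_zero.mp hzero)
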